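/- Let \Lambda = \mathbb{Z}, let z be a complex number with z \notin \mathbb{Z}, and let t be real. Then \sum_{n \in \mathbb{Z}} e^{2\pi i n t}/(2\pi i (n + z)) (taken as the symmetric limit over |n| \le N) equals e^{(\lfloor t \rfloor - t) 2\pi i z}/(1 - e^{-2\pi i z}) for all t \notin \mathbb{Z}. -/

import Mathlib

open Complex Filter Finset


open Real

set_option maxHeartbeats 1000000

lemma zpow_dirichlet (q : ℂ) (hq : q ≠ 0) (h1 : q ≠ 1) (N : ℕ) :
    ∑ n ∈ Finset.Icc (-(N : ℤ)) (N : ℤ), q ^ n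
      = (q ^ ((N : ℤ) + 1) - q ^ (-(N : ℤ))) / (q - 1) := by
  have hd : q - 1 ≠ 0 := sub_ne_zero.mpr h1
  induction N with
  | zero => simp [div_self hd]
  | succ N ih =>
    have hsplit : Finset.Icc (-((N:ℤ)+1)) ((N:ℤ)+1)
        = insert (-((N:ℤ)+1)) (insert ((N:ℤ)+1) (Finset.Icc (-(N:ℤ)) (N:ℤ))) := by
      ext x; simp only [Finset.mem_Icc, Finset.mem_insert]; omega
    have h1' : (-((N:ℤ)+1)) ∉ insert ((N:ℤ)+1) (Finset.Icc (-(N:ℤ)) (N:ℤ)) := by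
      simp only [Finset.mem_Icc, Finset.mem_insert]; omega
    have h2 : ((N:ℤ)+1) ∉ Finset.Icc (-(N:ℤ)) (N:ℤ) := by simp only [Finset.mem_Icc]; omega
    push_cast
    rw [hsplit, Finset.sum_insert h1', Finset.sum_insert h2, ih]
    rw [show -((N:ℤ)+1) = -(N:ℤ) + (-1) by ring, show (N:ℤ)+1+1 = ((N:ℤ)+1) + 1 by ring,
      zpow_add₀ hq, zpow_add₀ hq ((N:ℤ)+1)]
    simp only [zpow_neg, zpow_one]
    field_simp
    ring

lemma dirichlet_sum (a : ℂ) (ha : Complex.exp a ≠ 1) (N : ℕ) :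
    ∑ n ∈ Finset.Icc (-(N : ℤ)) (N : ℤ), Complex.exp ((n : ℂ) * a)
      = (Complex.exp (((N : ℂ) + 1) * a) - Complex.exp (-(N : ℂ) * a))
          / (Complex.exp a - 1) := by
  have h1 : Complex.exp (((N : ℂ) + 1) * a) = Complex.exp a ^ ((N : ℤ) + 1) := by
    rw [← Complex.exp_int_mul]; push_cast; ring_nf
  have h2 : Complex.exp (-(N : ℂ) * a) = Complex.exp a ^ (-(N : ℤ)) := by
    rw [← Complex.exp_int_mul]; push_cast; ring_nf
  rw [h1, h2, ← zpow_dirichlet _ (Complex.exp_ne_zero a) ha]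
  exact Finset.sum_congr rfl fun n _ => Complex.exp_int_mul a n

local notation "cc" => (2 * (Real.pi : ℂ) * Complex.I)

lemma cc_ne : cc ≠ 0 := by
  simp [Real.pi_ne_zero, Complex.I_ne_zero]

lemma exp_cc_ne_one {w : ℂ} (hw : ∀ m : ℤ, w ≠ (m : ℂ)) : Complex.exp (cc * w) ≠ 1 := by
  intro h
  rw [Complex.exp_eq_one_iff] at h
  obtain ⟨m, hm⟩ := h
  exact hw m (mul_left_cancel₀ cc_ne (by rw [hm]; ring))

lemma exp_cc_real_ne_one {u : ℝ} (hu0 : u ≠ 0) (hu : |u| < 1) :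
    Complex.exp (cc * (u : ℂ)) ≠ 1 := by
  refine exp_cc_ne_one fun m hm => ?_
  have hum : u = (m : ℝ) := by exact_mod_cast hm
  have := abs_lt.mp hu
  have h1 : -1 < (m:ℝ) := by rw [← hum]; exact this.1
  have h2 : (m:ℝ) < 1 := by rw [← hum]; exact this.2
  have h1' : -1 < m := by exact_mod_cast h1
  have h2' : m < 1 := by exact_mod_cast h2
  have : m = 0 := by omega
  exact hu0 (by rw [hum, this]; simp)

noncomputable def gg (z : ℂ) (x : ℝ) : ℂ :=
  Complex.exp (-(2 * (Real.pi : ℂ) * Complex.I * z) * (x : ℂ)) /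
    (1 - Complex.exp (-(2 * (Real.pi : ℂ) * Complex.I * z)))

lemma gg_cont (z : ℂ) : Continuous (gg z) := by
  unfold gg
  exact (Complex.continuous_exp.comp (continuous_const.mul Complex.continuous_ofReal)).div_const _

lemma gg_hasDerivAt (z : ℂ) (t : ℝ) : HasDerivAt (gg z) (-(cc * z) * gg z t) t := by
  have hG : HasDerivAt (fun w : ℂ => Complex.exp (-(cc * z) * w) /
      (1 - Complex.exp (-(cc * z)))) (-(cc * z) * gg z t) (t : ℂ) := by
    have h1 : HasDerivAt (fun w : ℂ => -(cc * z) * w) (-(cc * z)) (t : ℂ) := by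
      simpa using (hasDerivAt_id ((t : ℝ) : ℂ)).const_mul (-(cc * z))
    have h2 := h1.cexp
    have h3 := h2.div_const (1 - Complex.exp (-(cc * z)))
    convert h3 using 1
    · rfl
    · rfl
    unfold gg
    ring
  exact hG.comp_ofReal

noncomputable def HH (z : ℂ) (t : ℝ) (x : ℝ) : ℂ :=
  if x = t then z * gg z t
  else (gg z x - gg z t) / (Complex.exp (cc * ((t : ℂ) - (x : ℂ))) - 1)

lemma HH_tendsto (z : ℂ) (t : ℝ) :
    Tendsto (HH z t) (nhdsWithin t {t}ᶜ) (nhds (z * gg z t)) := by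
  have hg := (hasDerivAt_iff_tendsto_slope).mp (gg_hasDerivAt z t)
  -- φ
  set φ : ℝ → ℂ := fun x => Complex.exp (cc * ((t : ℂ) - (x : ℂ))) - 1 with hφdef
  have hφd : HasDerivAt φ (-cc) t := by
    have hG : HasDerivAt (fun w : ℂ => Complex.exp (cc * ((t : ℂ) - w)) - 1) (-cc) (t : ℂ) := by
      have h1 : HasDerivAt (fun w : ℂ => cc * ((t : ℂ) - w)) (-cc) (t : ℂ) := by
        simpa using ((hasDerivAt_id ((t:ℝ):ℂ)).const_sub ((t:ℝ):ℂ)).const_mul cc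
      have h2 := h1.cexp
      have h3 := h2.sub_const 1
      convert h3 using 1
      · rfl
      · rfl
      simp
    exact hG.comp_ofReal
  have hφ := (hasDerivAt_iff_tendsto_slope).mp hφd
  have hdiv := hg.div hφ (neg_ne_zero.mpr cc_ne)
  have hval : -(cc * z) * gg z t / (-cc) = z * gg z t := by
    rw [div_eq_iff (neg_ne_zero.mpr cc_ne)]
    ring
  rw [hval] at hdiv
  refine hdiv.congr' ?_
  filter_upwards [self_mem_nhdsWithin] with x hx
  have hx' : x ≠ t := hx
  have hxt : ((x : ℝ) - t) ≠ 0 := sub_ne_zero.mpr hx'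
  have hxtC : (((x - t : ℝ)) : ℂ) ≠ 0 := by exact_mod_cast hxt
  have hφt : φ t = 0 := by simp [hφdef]
  simp only [Pi.div_apply, slope, vsub_eq_sub, hφt, sub_zero]
  rw [HH, if_neg hx']
  rw [Complex.real_smul, Complex.real_smul, Complex.ofReal_inv]
  rw [mul_div_mul_left _ _ (inv_ne_zero hxtC)]

example : True := trivial

lemma HH_continuousAt (z : ℂ) (t : ℝ) (h0 : 0 < t) (h1 : t < 1) :
    ∀ x ∈ Set.Icc (0:ℝ) 1, ContinuousAt (HH z t) x := by
  intro x hx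
  rcases eq_or_ne x t with rfl | hxt
  · rw [ContinuousAt, show HH z x x = z * gg z x from if_pos rfl,
      ← nhdsNE_sup_pure x]
    refine Tendsto.sup (HH_tendsto z x) ?_
    have := tendsto_pure_nhds (HH z x) x
    rwa [show HH z x x = z * gg z x from if_pos rfl] at this
  · have hden : Complex.exp (cc * ((t : ℂ) - (x : ℂ))) - 1 ≠ 0 := by
      refine sub_ne_zero.mpr ?_
      have : ((t : ℂ) - (x : ℂ)) = ((t - x : ℝ) : ℂ) := by push_cast; ring
      rw [this]
      refine exp_cc_real_ne_one (sub_ne_zero.mpr (Ne.symm hxt)) ?_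
      rw [abs_lt]
      constructor <;> [nlinarith [hx.1, hx.2]; nlinarith [hx.1, hx.2]]
    have hF : ContinuousAt (fun y : ℝ =>
        (gg z y - gg z t) / (Complex.exp (cc * ((t : ℂ) - (y : ℂ))) - 1)) x := by
      refine ContinuousAt.div ?_ ?_ hden
      · exact ((gg_cont z).sub continuous_const).continuousAt
      · exact ((Complex.continuous_exp.comp
          (continuous_const.mul (continuous_const.sub Complex.continuous_ofReal))).sub
            continuous_const).continuousAt
    refine hF.congr ?_
    have hmem : {y : ℝ | y ≠ t} ∈ nhds x := isOpen_compl_singleton.mem_nhds hxt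
    filter_upwards [hmem] with y hy
    rw [HH, if_neg hy]

lemma exp_neg_cc_int (n : ℤ) : Complex.exp (-(cc * (n : ℂ))) = 1 := by
  have := Complex.exp_int_mul_two_pi_mul_I (-n)
  rw [← this]
  congr 1
  push_cast
  ring

lemma gden_ne (z : ℂ) (hz : ∀ m : ℤ, z ≠ (m : ℂ)) :
    1 - Complex.exp (-(2 * (Real.pi : ℂ) * Complex.I * z)) ≠ 0 := by
  intro h
  have h1 : Complex.exp (cc * (-z)) = 1 := by
    rw [show cc * (-z) = -(2 * (Real.pi:ℂ) * Complex.I * z) by ring]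
    exact (sub_eq_zero.mp h).symm
  exact exp_cc_ne_one (fun m hm => hz (-m) (by push_cast; linear_combination -hm)) h1

lemma term_integral (z : ℂ) (hz : ∀ m : ℤ, z ≠ (m : ℂ)) (t : ℝ) (n : ℤ) :
    ∫ x in (0:ℝ)..1, gg z x * Complex.exp (cc * (n : ℂ) * ((t : ℂ) - (x : ℂ)))
      = Complex.exp (cc * (n : ℂ) * (t : ℂ)) / (cc * ((n : ℂ) + z)) := by
  have hd := gden_ne z hz
  have hnz : (n : ℂ) + z ≠ 0 := fun h => hz (-n) (by push_cast; linear_combination h)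
  have hk : -(cc * ((n:ℂ) + z)) ≠ 0 := neg_ne_zero.mpr (mul_ne_zero cc_ne hnz)
  have hcongr : ∀ x : ℝ, gg z x * Complex.exp (cc * (n : ℂ) * ((t : ℂ) - (x : ℂ)))
      = (Complex.exp (cc * (n:ℂ) * (t:ℂ)) / (1 - Complex.exp (-(2 * (Real.pi : ℂ) * Complex.I * z))))
        * Complex.exp ((-(cc * ((n:ℂ) + z))) * (x:ℂ)) := by
    intro x
    rw [gg, div_mul_eq_mul_div, ← Complex.exp_add, div_mul_eq_mul_div, ← Complex.exp_add]
    congr 2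
    ring
  rw [intervalIntegral.integral_congr (fun x _ => hcongr x), intervalIntegral.integral_const_mul,
    integral_exp_mul_complex hk]
  have e1 : Complex.exp (-(cc * ((n:ℂ) + z)) * ((1:ℝ):ℂ))
      = Complex.exp (-(2 * (Real.pi : ℂ) * Complex.I * z)) := by
    rw [show -(cc * ((n:ℂ) + z)) * ((1:ℝ):ℂ) = -(cc * (n:ℂ)) + -(2*(Real.pi:ℂ)*Complex.I*z) by push_cast; ring,
      Complex.exp_add, exp_neg_cc_int, one_mul]
  have e0 : Complex.exp (-(cc * ((n:ℂ) + z)) * ((0:ℝ):ℂ)) = 1 := by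
    rw [show -(cc * ((n:ℂ) + z)) * ((0:ℝ):ℂ) = 0 by push_cast; ring, Complex.exp_zero]
  rw [e1, e0]
  rw [div_mul_div_comm, div_eq_div_iff (by exact mul_ne_zero hd hk) (mul_ne_zero cc_ne hnz)]
  ring

lemma const_integral (t : ℝ) (n : ℤ) (hn : n ≠ 0) :
    ∫ x in (0:ℝ)..1, Complex.exp (cc * (n : ℂ) * ((t : ℂ) - (x : ℂ))) = 0 := by
  have hk : -(cc * (n:ℂ)) ≠ 0 := by
    refine neg_ne_zero.mpr (mul_ne_zero cc_ne ?_)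
    exact_mod_cast hn
  have hcongr : ∀ x : ℝ, Complex.exp (cc * (n : ℂ) * ((t : ℂ) - (x : ℂ)))
      = Complex.exp (cc * (n:ℂ) * (t:ℂ)) * Complex.exp ((-(cc * (n:ℂ))) * (x:ℂ)) := by
    intro x
    rw [← Complex.exp_add]
    congr 1
    ring
  rw [intervalIntegral.integral_congr (fun x _ => hcongr x), intervalIntegral.integral_const_mul,
    integral_exp_mul_complex hk]
  have e1 : Complex.exp (-(cc * (n:ℂ)) * ((1:ℝ):ℂ)) = 1 := by
    rw [show -(cc * (n:ℂ)) * ((1:ℝ):ℂ) = -(cc * (n:ℂ)) by push_cast; ring, exp_neg_cc_int]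
  have e0 : Complex.exp (-(cc * (n:ℂ)) * ((0:ℝ):ℂ)) = 1 := by
    rw [show -(cc * (n:ℂ)) * ((0:ℝ):ℂ) = 0 by push_cast; ring, Complex.exp_zero]
  rw [e1, e0]
  simp

lemma const_integral_zero (t : ℝ) :
    ∫ x in (0:ℝ)..1, Complex.exp (cc * ((0:ℤ) : ℂ) * ((t : ℂ) - (x : ℂ))) = 1 := by
  simp

lemma RL (z : ℂ) (t : ℝ) :
    Tendsto (fun w : ℝ => ∫ x in (0:ℝ)..1,
        Complex.exp ((↑(2 * Real.pi * (-(x * w))) : ℂ) * Complex.I) * HH z t x)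
      (cocompact ℝ) (nhds 0) := by
  have h := Real.tendsto_integral_exp_smul_cocompact
    (Set.indicator (Set.Ioc (0:ℝ) 1) (HH z t))
  refine h.congr fun w => ?_
  calc ∫ v : ℝ, Real.fourierChar (-(v * w)) • Set.indicator (Set.Ioc (0:ℝ) 1) (HH z t) v
      = ∫ v : ℝ, Set.indicator (Set.Ioc (0:ℝ) 1)
          (fun v => Complex.exp ((↑(2 * Real.pi * (-(v * w))) : ℂ) * Complex.I) * HH z t v) v := by
        refine MeasureTheory.integral_congr_ae (Filter.Eventually.of_forall fun v => ?_)
        by_cases hv : v ∈ Set.Ioc (0:ℝ) 1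
        · simp only [Set.indicator_of_mem hv]
          rw [Circle.smul_def, Real.fourierChar_apply, smul_eq_mul]
        · simp [Set.indicator_of_notMem hv]
    _ = ∫ v in Set.Ioc (0:ℝ) 1,
          Complex.exp ((↑(2 * Real.pi * (-(v * w))) : ℂ) * Complex.I) * HH z t v :=
        MeasureTheory.integral_indicator measurableSet_Ioc
    _ = ∫ x in (0:ℝ)..1,
          Complex.exp ((↑(2 * Real.pi * (-(x * w))) : ℂ) * Complex.I) * HH z t x :=
        (intervalIntegral.integral_of_le zero_le_one).symm

lemma core (z : ℂ) (hz : ∀ m : ℤ, z ≠ (m : ℂ)) (t : ℝ) (h0 : 0 < t) (h1 : t < 1) :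
    Tendsto (fun N : ℕ => ∑ n ∈ Finset.Icc (-(N : ℤ)) (N : ℤ),
        Complex.exp (cc * (n : ℂ) * (t : ℂ)) / (cc * ((n : ℂ) + z)))
      atTop (nhds (gg z t)) := by
  set J : ℝ → ℂ := fun w => ∫ x in (0:ℝ)..1,
      Complex.exp ((↑(2 * Real.pi * (-(x * w))) : ℂ) * Complex.I) * HH z t x with hJdef
  have hEcont : ∀ n : ℤ, Continuous
      (fun x : ℝ => Complex.exp (cc * (n:ℂ) * ((t:ℂ) - (x:ℂ)))) := fun n =>
    Complex.continuous_exp.comp (continuous_const.mul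
      (continuous_const.sub Complex.continuous_ofReal))
  have hHcont : ContinuousOn (HH z t) (Set.uIcc (0:ℝ) 1) := fun x hx =>
    (HH_continuousAt z t h0 h1 x (by rwa [Set.uIcc_of_le zero_le_one] at hx)).continuousWithinAt
  -- Step 1
  have key1 : ∀ N : ℕ,
      (∑ n ∈ Finset.Icc (-(N : ℤ)) (N : ℤ),
        Complex.exp (cc * (n : ℂ) * (t : ℂ)) / (cc * ((n : ℂ) + z))) - gg z t
      = ∫ x in (0:ℝ)..1, (gg z x - gg z t) *
          (∑ n ∈ Finset.Icc (-(N : ℤ)) (N : ℤ),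
            Complex.exp (cc * (n:ℂ) * ((t:ℂ) - (x:ℂ)))) := by
    intro N
    have calc1 : ∫ x in (0:ℝ)..1, (gg z x - gg z t) *
          (∑ n ∈ Finset.Icc (-(N : ℤ)) (N : ℤ),
            Complex.exp (cc * (n:ℂ) * ((t:ℂ) - (x:ℂ))))
        = ∑ n ∈ Finset.Icc (-(N : ℤ)) (N : ℤ), ∫ x in (0:ℝ)..1,
            (gg z x - gg z t) * Complex.exp (cc * (n:ℂ) * ((t:ℂ) - (x:ℂ))) := by
      rw [intervalIntegral.integral_congr
        (g := fun x => ∑ n ∈ Finset.Icc (-(N : ℤ)) (N : ℤ),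
          (gg z x - gg z t) * Complex.exp (cc * (n:ℂ) * ((t:ℂ) - (x:ℂ))))
        (fun x _ => Finset.mul_sum _ _ _)]
      exact intervalIntegral.integral_finset_sum fun n _ =>
        ((((gg_cont z).sub continuous_const).mul (hEcont n)).intervalIntegrable 0 1)
    rw [calc1]
    have calc2 : ∀ n ∈ Finset.Icc (-(N : ℤ)) (N : ℤ), (∫ x in (0:ℝ)..1,
          (gg z x - gg z t) * Complex.exp (cc * (n:ℂ) * ((t:ℂ) - (x:ℂ))))
        = Complex.exp (cc * (n : ℂ) * (t : ℂ)) / (cc * ((n : ℂ) + z))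
          - (if n = 0 then gg z t else 0) := by
      intro n _
      rw [intervalIntegral.integral_congr
        (g := fun x => gg z x * Complex.exp (cc * (n:ℂ) * ((t:ℂ) - (x:ℂ)))
          - gg z t * Complex.exp (cc * (n:ℂ) * ((t:ℂ) - (x:ℂ)))) (fun x _ => by ring)]
      rw [intervalIntegral.integral_sub
        (f := fun x => gg z x * Complex.exp (cc * (n:ℂ) * ((t:ℂ) - (x:ℂ))))
        (g := fun x => gg z t * Complex.exp (cc * (n:ℂ) * ((t:ℂ) - (x:ℂ))))
        (((gg_cont z).mul (hEcont n)).intervalIntegrable 0 1)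
        ((continuous_const.mul (hEcont n)).intervalIntegrable 0 1)]
      rw [term_integral z hz t n, intervalIntegral.integral_const_mul]
      congr 1
      rcases eq_or_ne n 0 with rfl | hn
      · rw [const_integral_zero t, if_pos rfl, mul_one]
      · rw [const_integral t n hn, if_neg hn, mul_zero]
    rw [Finset.sum_congr rfl calc2, Finset.sum_sub_distrib, Finset.sum_ite_eq',
      if_pos (by simp : (0:ℤ) ∈ Finset.Icc (-(N:ℤ)) (N:ℤ))]
  -- Step 2: pointwise Dirichlet kernel rewrite
  have key2 : ∀ N : ℕ, ∀ x ∈ Set.uIcc (0:ℝ) 1,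
      (gg z x - gg z t) * (∑ n ∈ Finset.Icc (-(N : ℤ)) (N : ℤ),
          Complex.exp (cc * (n:ℂ) * ((t:ℂ) - (x:ℂ))))
      = HH z t x * (Complex.exp (cc * ((N:ℂ)+1) * ((t:ℂ) - (x:ℂ)))
          - Complex.exp (-(cc * (N:ℂ)) * ((t:ℂ) - (x:ℂ)))) := by
    intro N x hx
    rw [Set.uIcc_of_le zero_le_one] at hx
    rcases eq_or_ne x t with rfl | hxt
    · simp
    · have ha : Complex.exp (cc * ((t:ℂ) - (x:ℂ))) ≠ 1 := by
        rw [show ((t:ℂ) - (x:ℂ)) = ((t - x : ℝ) : ℂ) by push_cast; ring]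
        refine exp_cc_real_ne_one (sub_ne_zero.mpr (Ne.symm hxt)) ?_
        rw [abs_lt]
        constructor <;> nlinarith [hx.1, hx.2]
      have hsum : (∑ n ∈ Finset.Icc (-(N : ℤ)) (N : ℤ),
            Complex.exp (cc * (n:ℂ) * ((t:ℂ) - (x:ℂ))))
          = ∑ n ∈ Finset.Icc (-(N : ℤ)) (N : ℤ),
            Complex.exp ((n:ℂ) * (cc * ((t:ℂ) - (x:ℂ)))) :=
        Finset.sum_congr rfl fun n _ => by congr 1; ring
      rw [hsum, dirichlet_sum _ ha N, HH, if_neg hxt]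
      rw [show Complex.exp (((N:ℂ)+1) * (cc * ((t:ℂ) - (x:ℂ))))
          = Complex.exp (cc * ((N:ℂ)+1) * ((t:ℂ) - (x:ℂ))) by congr 1; ring,
        show Complex.exp (-(N:ℂ) * (cc * ((t:ℂ) - (x:ℂ))))
          = Complex.exp (-(cc * (N:ℂ)) * ((t:ℂ) - (x:ℂ))) by congr 1; ring]
      ring
  -- Step 3
  have key3 : ∀ N : ℕ, (∫ x in (0:ℝ)..1, HH z t x *
        (Complex.exp (cc * ((N:ℂ)+1) * ((t:ℂ) - (x:ℂ)))
          - Complex.exp (-(cc * (N:ℂ)) * ((t:ℂ) - (x:ℂ)))))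
      = Complex.exp (cc * ((N:ℂ)+1) * (t:ℂ)) * J ((N:ℝ)+1)
        - Complex.exp (-(cc * (N:ℂ)) * (t:ℂ)) * J (-(N:ℝ)) := by
    intro N
    have hE1 : Continuous (fun x : ℝ => Complex.exp (cc * ((N:ℂ)+1) * ((t:ℂ) - (x:ℂ)))) :=
      Complex.continuous_exp.comp (continuous_const.mul
        (continuous_const.sub Complex.continuous_ofReal))
    have hE2 : Continuous (fun x : ℝ => Complex.exp (-(cc * (N:ℂ)) * ((t:ℂ) - (x:ℂ)))) :=
      Complex.continuous_exp.comp (continuous_const.mul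
        (continuous_const.sub Complex.continuous_ofReal))
    rw [intervalIntegral.integral_congr
      (g := fun x => HH z t x * Complex.exp (cc * ((N:ℂ)+1) * ((t:ℂ) - (x:ℂ)))
        - HH z t x * Complex.exp (-(cc * (N:ℂ)) * ((t:ℂ) - (x:ℂ)))) (fun x _ => by ring)]
    rw [intervalIntegral.integral_sub
      (f := fun x => HH z t x * Complex.exp (cc * ((N:ℂ)+1) * ((t:ℂ) - (x:ℂ))))
      (g := fun x => HH z t x * Complex.exp (-(cc * (N:ℂ)) * ((t:ℂ) - (x:ℂ))))
      ((hHcont.mul hE1.continuousOn).intervalIntegrable)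
      ((hHcont.mul hE2.continuousOn).intervalIntegrable)]
    congr 1
    · rw [hJdef]
      simp only []
      rw [← intervalIntegral.integral_const_mul]
      refine intervalIntegral.integral_congr fun x _ => ?_
      rw [← mul_assoc, mul_comm (Complex.exp (cc * ((N:ℂ)+1) * (t:ℂ))), mul_assoc,
        ← Complex.exp_add]
      rw [mul_comm (HH z t x)]
      congr 2
      push_cast
      ring
    · rw [hJdef]
      simp only []
      rw [← intervalIntegral.integral_const_mul]
      refine intervalIntegral.integral_congr fun x _ => ?_
      rw [← mul_assoc, mul_comm (Complex.exp (-(cc * (N:ℂ)) * (t:ℂ))), mul_assoc,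
        ← Complex.exp_add]
      rw [mul_comm (HH z t x)]
      congr 2
      push_cast
      ring
  have key : ∀ N : ℕ,
      (∑ n ∈ Finset.Icc (-(N : ℤ)) (N : ℤ),
        Complex.exp (cc * (n : ℂ) * (t : ℂ)) / (cc * ((n : ℂ) + z))) - gg z t
      = Complex.exp (cc * ((N:ℂ)+1) * (t:ℂ)) * J ((N:ℝ)+1)
        - Complex.exp (-(cc * (N:ℂ)) * (t:ℂ)) * J (-(N:ℝ)) := fun N =>
    (key1 N).trans ((intervalIntegral.integral_congr (key2 N)).trans (key3 N))
  -- limits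
  have hJ := RL z t
  have hl1 : Tendsto (fun N : ℕ => ((N:ℝ)+1)) atTop (cocompact ℝ) := by
    rw [cocompact_eq_atBot_atTop]
    exact (tendsto_atTop_add_const_right atTop 1 tendsto_natCast_atTop_atTop).mono_right
      le_sup_right
  have hl2 : Tendsto (fun N : ℕ => (-(N:ℝ))) atTop (cocompact ℝ) := by
    rw [cocompact_eq_atBot_atTop]
    exact (tendsto_neg_atBot_iff.mpr tendsto_natCast_atTop_atTop).mono_right le_sup_left
  have lim1 : Tendsto (fun N : ℕ =>
      Complex.exp (cc * ((N:ℂ)+1) * (t:ℂ)) * J ((N:ℝ)+1)) atTop (nhds 0) := by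
    rw [tendsto_zero_iff_norm_tendsto_zero]
    have h0' : Tendsto (fun N : ℕ => ‖J ((N:ℝ)+1)‖) atTop (nhds 0) :=
      tendsto_zero_iff_norm_tendsto_zero.mp (hJ.comp hl1)
    refine squeeze_zero (fun N => norm_nonneg _) (fun N => ?_) h0'
    rw [norm_mul, show ‖Complex.exp (cc * ((N:ℂ)+1) * (t:ℂ))‖ = 1 by
      rw [show cc * ((N:ℂ)+1) * (t:ℂ) = ((2*Real.pi*(((N:ℝ)+1)*t) : ℝ):ℂ) * Complex.I by
        push_cast; ring, Complex.norm_exp_ofReal_mul_I], one_mul]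
  have lim2 : Tendsto (fun N : ℕ =>
      Complex.exp (-(cc * (N:ℂ)) * (t:ℂ)) * J (-(N:ℝ))) atTop (nhds 0) := by
    rw [tendsto_zero_iff_norm_tendsto_zero]
    have h0' : Tendsto (fun N : ℕ => ‖J (-(N:ℝ))‖) atTop (nhds 0) :=
      tendsto_zero_iff_norm_tendsto_zero.mp (hJ.comp hl2)
    refine squeeze_zero (fun N => norm_nonneg _) (fun N => ?_) h0'
    rw [norm_mul, show ‖Complex.exp (-(cc * (N:ℂ)) * (t:ℂ))‖ = 1 by
      rw [show -(cc * (N:ℂ)) * (t:ℂ) = ((2*Real.pi*(-(N:ℝ)*t) : ℝ):ℂ) * Complex.I by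
        push_cast; ring, Complex.norm_exp_ofReal_mul_I], one_mul]
  have hdiff := (lim1.sub lim2).congr fun N => (key N).symm
  rw [sub_zero] at hdiff
  exact tendsto_sub_nhds_zero_iff.mp hdiff


/-- For `z ∈ ℂ \ ℤ` and real `t ∉ ℤ`, the symmetric limit
`∑_{|n|≤N} e^{2πint}/(2πi(n+z))` converges to `e^{(⌊t⌋-t)2πiz}/(1 - e^{-2πiz})`. -/
theorem affine_bernoulli_series_one
    (z : ℂ) (hz : ∀ m : ℤ, z ≠ (m : ℂ))
    (t : ℝ) (ht : ∀ m : ℤ, t ≠ (m : ℝ)) :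
    Tendsto
      (fun N : ℕ => ∑ n ∈ Finset.Icc (-(N : ℤ)) (N : ℤ),
        Complex.exp (2 * (Real.pi : ℂ) * Complex.I * (n : ℂ) * (t : ℂ)) /
          (2 * (Real.pi : ℂ) * Complex.I * ((n : ℂ) + z)))
      atTop
      (nhds (Complex.exp (((⌊t⌋ : ℂ) - (t : ℂ)) * (2 * (Real.pi : ℂ) * Complex.I) * z) /
        (1 - Complex.exp (-(2 * (Real.pi : ℂ) * Complex.I) * z)))) := by
  
  have h0 : 0 < Int.fract t := Int.fract_pos.mpr (ht ⌊t⌋)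
  have h1 : Int.fract t < 1 := Int.fract_lt_one t
  have hC : ((Int.fract t : ℝ) : ℂ) = (t : ℂ) - ((⌊t⌋ : ℤ) : ℂ) := by
    rw [show Int.fract t = t - (⌊t⌋ : ℝ) from (Int.self_sub_floor t).symm]
    push_cast
    ring
  have hfun : (fun N : ℕ => ∑ n ∈ Finset.Icc (-(N : ℤ)) (N : ℤ),
        Complex.exp (2 * (Real.pi : ℂ) * Complex.I * (n : ℂ) * (t : ℂ)) /
          (2 * (Real.pi : ℂ) * Complex.I * ((n : ℂ) + z)))
      = (fun N : ℕ => ∑ n ∈ Finset.Icc (-(N : ℤ)) (N : ℤ),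
        Complex.exp (cc * (n : ℂ) * ((Int.fract t : ℝ) : ℂ)) / (cc * ((n : ℂ) + z))) := by
    funext N
    refine Finset.sum_congr rfl fun n _ => ?_
    congr 1
    rw [show cc * (n : ℂ) * ((t : ℝ) : ℂ)
        = cc * (n : ℂ) * ((Int.fract t : ℝ) : ℂ) + ((n * ⌊t⌋ : ℤ) : ℂ) * (2 * (Real.pi:ℂ) * Complex.I) by
      rw [hC]; push_cast; ring]
    rw [Complex.exp_add, Complex.exp_int_mul_two_pi_mul_I, mul_one]
  have hval : gg z (Int.fract t)
      = Complex.exp (((⌊t⌋ : ℂ) - (t : ℂ)) * (2 * (Real.pi : ℂ) * Complex.I) * z) /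
        (1 - Complex.exp (-(2 * (Real.pi : ℂ) * Complex.I) * z)) := by
    rw [gg, show -(2 * (Real.pi:ℂ) * Complex.I * z) * ((Int.fract t : ℝ) : ℂ)
        = ((⌊t⌋ : ℂ) - (t : ℂ)) * (2 * (Real.pi : ℂ) * Complex.I) * z by rw [hC]; ring,
      show -(2 * (Real.pi:ℂ) * Complex.I * z) = -(2 * (Real.pi : ℂ) * Complex.I) * z by ring]
  rw [hfun, ← hval]
  exact core z hz (Int.fract t) h0 h1
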